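/- arXiv:2007.11558 — 2 statements merged into one kernel-verified Lean document; each statement's English description precedes it below -/
import Mathlib

section
/- If ν is a P-stationary probability measure, then ν is f-quasi-invariant: f_*ν is absolutely continuous with respect to ν, and f⁻¹_*ν is absolutely continuous with respect to ν. -/
open MeasureTheory Filter
open scoped ENNReal NNReal BoundedContinuousFunction Topology

/-- If the `lintegral` of every bounded continuous `ℝ≥0`-valued function against `μ` is
bounded by `C` times its `lintegral` against `ρ`, then `μ ≪ ρ`. -/
lemma absCont_of_lintegral_le {M : Type*} [MetricSpace M] [CompactSpace M]
    [MeasurableSpace M] [BorelSpace M]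
    (μ ρ : Measure M) [IsFiniteMeasure μ] [IsFiniteMeasure ρ]
    (C : ℝ≥0∞) (hC : C ≠ ∞)
    (h : ∀ ψ : M →ᵇ ℝ≥0, ∫⁻ x, ψ x ∂μ ≤ C * ∫⁻ x, ψ x ∂ρ) : μ ≪ ρ := by
  refine Measure.AbsolutelyContinuous.mk (fun s hs hρs => ?_)
  have key : ∀ K : Set M, K ⊆ s → IsCompact K → μ K = 0 := by
    intro K hKs hK
    have hKc : IsClosed K := hK.isClosed
    have hρK : ρ K = 0 := measure_mono_null hKs hρs
    have lim := HasOuterApproxClosed.tendsto_lintegral_apprSeq hKc ρ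
    have lim' : Tendsto (fun n => C * ∫⁻ x, hKc.apprSeq n x ∂ρ) atTop (𝓝 (C * ρ K)) :=
      ENNReal.Tendsto.const_mul lim (Or.inr hC)
    have hle : ∀ n, μ K ≤ C * ∫⁻ x, hKc.apprSeq n x ∂ρ := fun n =>
      (HasOuterApproxClosed.measure_le_lintegral hKc μ n).trans (h _)
    have hfin : μ K ≤ C * ρ K := ge_of_tendsto lim' (Eventually.of_forall hle)
    rw [hρK, mul_zero] at hfin
    exact le_antisymm hfin zero_le
  rw [hs.measure_eq_iSup_isCompact μ]
  simp only [ENNReal.iSup_eq_zero]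
  intro K
  by_cases h1 : K ⊆ s
  · by_cases h2 : IsCompact K
    · simp [h1, h2, key K h1 h2]
    · simp [h2]
  · simp [h1]

/-- A `P`-stationary measure is `f`-quasi-invariant: both `f_*ν` and `f⁻¹_*ν` are
absolutely continuous with respect to `ν`. -/
theorem stationary_measure_quasi_invariant
    {M : Type*} [MetricSpace M] [CompactSpace M]
    [MeasurableSpace M] [BorelSpace M]
    (f : M ≃ₜ M) (p : C(M, ℝ)) (hp : ∀ x, p x ∈ Set.Ioo (0 : ℝ) 1)
    (ν : Measure M) [IsProbabilityMeasure ν]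
    (hstat : ∀ ψ : C(M, ℝ),
      ∫ x, (p x * ψ (f x) + (1 - p x) * ψ (f.symm x)) ∂ν = ∫ x, ψ x ∂ν) :
    Measure.map f ν ≪ ν ∧ Measure.map f.symm ν ≪ ν := by
  have hne : Nonempty M := by
    by_contra h
    have : ν Set.univ = 0 := by
      simp [Set.univ_eq_empty_iff.mpr (not_nonempty_iff.mp h)]
    simp [measure_univ] at this
  -- minimum of p and of 1 - p
  obtain ⟨x₀, hx₀⟩ := p.continuous.exists_forall_le' (Classical.arbitrary M)
    (by simp [Filter.cocompact_eq_bot])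
  obtain ⟨x₁, hx₁⟩ := (Continuous.exists_forall_le'
    (f := fun x => 1 - p x) (by continuity) (Classical.arbitrary M)
    (by simp [Filter.cocompact_eq_bot]))
  set ε : ℝ := min (p x₀) (1 - p x₁) with hεdef
  have hε0 : 0 < ε := lt_min (hp x₀).1 (by linarith [(hp x₁).2])
  have hεp : ∀ x, ε ≤ p x := fun x => le_trans (min_le_left _ _) (hx₀ x)
  have hεq : ∀ x, ε ≤ 1 - p x := fun x => le_trans (min_le_right _ _) (hx₁ x)
  -- integrability of continuous functions
  have hint : ∀ g : M → ℝ, Continuous g → Integrable g ν := fun g hg =>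
    (BoundedContinuousFunction.mkOfCompact ⟨g, hg⟩).integrable ν
  -- key real-integral estimates
  have key : ∀ ψ : M →ᵇ ℝ≥0,
      ε * ∫ x, (ψ (f x) : ℝ) ∂ν ≤ ∫ x, (ψ x : ℝ) ∂ν ∧
      ε * ∫ x, (ψ (f.symm x) : ℝ) ∂ν ≤ ∫ x, (ψ x : ℝ) ∂ν := by
    intro ψ
    set ψr : C(M, ℝ) := ⟨fun x => (ψ x : ℝ), NNReal.continuous_coe.comp ψ.continuous⟩ with hψr
    have hψnn : ∀ x, (0 : ℝ) ≤ ψr x := fun x => (ψ x).2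
    have hstatψ := hstat ψr
    have hcf : Continuous fun x => ψr (f x) := ψr.continuous.comp f.continuous
    have hcg : Continuous fun x => ψr (f.symm x) := ψr.continuous.comp f.symm.continuous
    have hi1 : Integrable (fun x => p x * ψr (f x)) ν :=
      hint _ (p.continuous.mul hcf)
    have hi2 : Integrable (fun x => (1 - p x) * ψr (f.symm x)) ν :=
      hint _ ((continuous_const.sub p.continuous).mul hcg)
    have hif : Integrable (fun x => ψr (f x)) ν := hint _ hcf
    have hig : Integrable (fun x => ψr (f.symm x)) ν := hint _ hcg
    rw [integral_add hi1 hi2] at hstatψ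
    have h1 : ε * ∫ x, ψr (f x) ∂ν ≤ ∫ x, p x * ψr (f x) ∂ν := by
      rw [← integral_const_mul]
      apply integral_mono (hif.const_mul ε) hi1
      intro x
      exact mul_le_mul_of_nonneg_right (hεp x) (hψnn (f x))
    have h2 : ε * ∫ x, ψr (f.symm x) ∂ν ≤ ∫ x, (1 - p x) * ψr (f.symm x) ∂ν := by
      rw [← integral_const_mul]
      apply integral_mono (hig.const_mul ε) hi2
      intro x
      exact mul_le_mul_of_nonneg_right (hεq x) (hψnn (f.symm x))
    have hnn1 : 0 ≤ ∫ x, p x * ψr (f x) ∂ν :=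
      integral_nonneg fun x => mul_nonneg (hp x).1.le (hψnn _)
    have hnn2 : 0 ≤ ∫ x, (1 - p x) * ψr (f.symm x) ∂ν :=
      integral_nonneg fun x => mul_nonneg (by linarith [(hp x).2]) (hψnn _)
    constructor
    · show ε * ∫ x, ψr (f x) ∂ν ≤ ∫ x, ψr x ∂ν
      linarith
    · show ε * ∫ x, ψr (f.symm x) ∂ν ≤ ∫ x, ψr x ∂ν
      linarith
  -- convert to lintegral estimates
  have C_ne : (ENNReal.ofReal (1 / ε)) ≠ ∞ := ENNReal.ofReal_ne_top
  have hlkey : ∀ (g : M → M), Continuous g →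
      (∀ ψ : M →ᵇ ℝ≥0, ε * ∫ x, (ψ (g x) : ℝ) ∂ν ≤ ∫ x, (ψ x : ℝ) ∂ν) →
      Measure.map g ν ≪ ν := by
    intro g hg hineq
    have : IsProbabilityMeasure (Measure.map g ν) :=
      Measure.isProbabilityMeasure_map hg.measurable.aemeasurable
    apply absCont_of_lintegral_le _ _ (ENNReal.ofReal (1 / ε)) C_ne
    intro ψ
    have hmap : ∫⁻ x, (ψ x : ℝ≥0∞) ∂(Measure.map g ν) = ∫⁻ x, (ψ (g x) : ℝ≥0∞) ∂ν := by
      rw [lintegral_map ψ.measurable_coe_ennreal_comp hg.measurable]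
    have hiψg : Integrable (fun x => (ψ (g x) : ℝ)) ν :=
      hint _ (NNReal.continuous_coe.comp (ψ.continuous.comp hg))
    have hiψ : Integrable (fun x => (ψ x : ℝ)) ν :=
      hint _ (NNReal.continuous_coe.comp ψ.continuous)
    rw [hmap, lintegral_coe_eq_integral _ hiψg, lintegral_coe_eq_integral _ hiψ,
      ← ENNReal.ofReal_mul (by positivity)]
    apply ENNReal.ofReal_le_ofReal
    have := hineq ψ
    rw [div_mul_eq_mul_div, one_mul, le_div_iff₀ hε0, mul_comm]
    exact this
  constructor
  · exact hlkey f f.continuous fun ψ => (key ψ).1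
  · exact hlkey f.symm f.symm.continuous fun ψ => (key ψ).2
end

section
/- Suppose p/(q∘f) = (π∘f)/π μ-almost everywhere for some positive integrable function π with ∫π dμ = 1, where μ is f-invariant. Then the measure ν = π·μ is P-stationary: for every continuous ψ, ∫ (p·ψ∘f + q·ψ∘f⁻¹) π dμ = ∫ ψ π dμ. -/
open MeasureTheory

/-- If `p/(q∘f) = (π∘f)/π` μ-a.e. for a positive integrable `π` of integral `1` and
`μ` is `f`-invariant, then `ν = π·μ` is `P`-stationary:
`∫ (p·ψ∘f + q·ψ∘f⁻¹)·π dμ = ∫ ψ·π dμ` for every continuous `ψ`. -/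
theorem density_cocycle_gives_stationary_measure
    {M : Type*} [MetricSpace M] [CompactSpace M]
    [MeasurableSpace M] [BorelSpace M]
    (f : M ≃ₜ M) (μ : Measure M) [IsProbabilityMeasure μ]
    (hinv : Measure.map f μ = μ)
    (p : C(M, ℝ)) (hp : ∀ x, p x ∈ Set.Ioo (0 : ℝ) 1) (q : M → ℝ)
    (hq : ∀ x, q x = 1 - p x)
    (π : M → ℝ) (hπmeas : Measurable π) (hπpos : ∀ x, 0 < π x)
    (hπint : Integrable π μ) (hπone : ∫ x, π x ∂μ = 1)
    (hcob : ∀ᵐ x ∂μ, p x / q (f x) = π (f x) / π x) :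
    ∀ ψ : C(M, ℝ),
      ∫ x, (p x * ψ (f x) + q x * ψ (f.symm x)) * π x ∂μ = ∫ x, ψ x * π x ∂μ := by
  have hq' : q = fun x => 1 - p x := funext hq
  subst hq'
  intro ψ
  have hmp : MeasurePreserving f μ μ := ⟨f.continuous.measurable, hinv⟩
  have hemb : MeasurableEmbedding f := f.measurableEmbedding
  -- key a.e. identity
  have key : ∀ᵐ x ∂μ, (1 - p (f x)) * π (f x) = p x * π x := by
    filter_upwards [hcob] with x hx
    have hq0 : (1 : ℝ) - p (f x) ≠ 0 := by
      have := (hp (f x)).2; linarith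
    have hπ0 : π x ≠ 0 := (hπpos x).ne'
    field_simp at hx
    linarith [hx]
  -- integrability of bounded-times-π functions
  have hbdd : ∀ (c : C(M, ℝ)), Integrable (fun x => c x * π x) μ := by
    intro c
    exact hπint.bdd_mul c.continuous.aestronglyMeasurable
      (c := ‖c‖) (Filter.Eventually.of_forall fun x => c.norm_coe_le_norm x)
  have hcont_symm : Continuous fun x => ψ (f.symm x) :=
    ψ.continuous.comp f.symm.continuous
  have hi1 : Integrable (fun x => p x * ψ (f x) * π x) μ :=
    hbdd (p * ψ.comp ⟨f, f.continuous⟩)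
  have hi2 : Integrable (fun x => (1 - p x) * ψ (f.symm x) * π x) μ :=
    hbdd ((1 - p) * ⟨fun x => ψ (f.symm x), hcont_symm⟩)
  -- first term
  have h1 : ∫ x, p x * ψ (f x) * π x ∂μ = ∫ x, (1 - p x) * ψ x * π x ∂μ := by
    have e1 : ∫ x, p x * ψ (f x) * π x ∂μ
        = ∫ x, (1 - p (f x)) * ψ (f x) * π (f x) ∂μ := by
      apply integral_congr_ae
      filter_upwards [key] with x hx
      rw [show p x * ψ (f x) * π x = ψ (f x) * (p x * π x) by ring, ← hx]; ring
    rw [e1]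
    exact hmp.integral_comp hemb (fun y => (1 - p y) * ψ y * π y)
  -- second term
  have h2 : ∫ x, (1 - p x) * ψ (f.symm x) * π x ∂μ = ∫ x, p x * ψ x * π x ∂μ := by
    have e2 : ∫ x, (1 - p x) * ψ (f.symm x) * π x ∂μ
        = ∫ x, (1 - p (f x)) * ψ (f.symm (f x)) * π (f x) ∂μ :=
      (hmp.integral_comp hemb (fun y => (1 - p y) * ψ (f.symm y) * π y)).symm
    rw [e2]
    apply integral_congr_ae
    filter_upwards [key] with x hx
    simp only [Homeomorph.symm_apply_apply]
    rw [show (1 - p (f x)) * ψ x * π (f x) = ψ x * ((1 - p (f x)) * π (f x)) by ring, hx]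
    ring
  calc ∫ x, (p x * ψ (f x) + (1 - p x) * ψ (f.symm x)) * π x ∂μ
      = ∫ x, (p x * ψ (f x) * π x + (1 - p x) * ψ (f.symm x) * π x) ∂μ := by
        congr 1; ext x; ring
    _ = (∫ x, p x * ψ (f x) * π x ∂μ) + ∫ x, (1 - p x) * ψ (f.symm x) * π x ∂μ :=
        integral_add hi1 hi2
    _ = (∫ x, (1 - p x) * ψ x * π x ∂μ) + ∫ x, p x * ψ x * π x ∂μ := by rw [h1, h2]
    _ = ∫ x, ((1 - p x) * ψ x * π x + p x * ψ x * π x) ∂μ :=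
        (integral_add (hbdd ((1 - p) * ψ)) (hbdd (p * ψ))).symm
    _ = ∫ x, ψ x * π x ∂μ := by congr 1; ext x; ring
end
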